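/- Let k0, k1, k2 be natural numbers and M ⊆ ℝ^{k0} a nonempty set. Let φ1 : ℝ^{k0} → ℝ^{k1} and φ2 : ℝ^{k0} → ℝ^{k2} be linear maps such that there exist constants c1 ≥ 1 and c2 > 0 with ‖φ1(u)‖ = c1‖u‖ and ‖φ2(u)‖ = c2‖u‖ for all u. Set φ(u) = (φ1(u), φ2(u)) ∈ ℝ^{k1} × ℝ^{k2}, so that ‖φ(u)‖ = c‖u‖ with c = √(c1² + c2²). Let v = (v1, v2) ∈ ℝ^{k1} × ℝ^{k2}, and suppose y0 ∈ M satisfies ‖v − φ(y0)‖ ≤ ‖v − φ(y)‖ for all y ∈ M (so d := ‖v − φ(y0)‖ is the distance from v to φ(M)), and y1 ∈ M satisfies ‖v1 − φ1(y1)‖ ≤ ‖v1 − φ1(y)‖ for all y ∈ M. Then ‖v − φ(y1)‖ ≤ (1 + 2c)·d. -/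
import Mathlib

lemma sqrt_add_le (a b p q : ℝ) (ha : 0 ≤ a) (hb : 0 ≤ b) (hp : 0 ≤ p) (hq : 0 ≤ q) :
    Real.sqrt ((a + p) ^ 2 + (b + q) ^ 2) ≤
      Real.sqrt (a ^ 2 + b ^ 2) + Real.sqrt (p ^ 2 + q ^ 2) := by
  have hs : Real.sqrt (a ^ 2 + b ^ 2) ^ 2 = a ^ 2 + b ^ 2 := Real.sq_sqrt (by positivity)
  have ht : Real.sqrt (p ^ 2 + q ^ 2) ^ 2 = p ^ 2 + q ^ 2 := Real.sq_sqrt (by positivity)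
  have hs0 : 0 ≤ Real.sqrt (a ^ 2 + b ^ 2) := Real.sqrt_nonneg _
  have ht0 : 0 ≤ Real.sqrt (p ^ 2 + q ^ 2) := Real.sqrt_nonneg _
  have key : (a + p) ^ 2 + (b + q) ^ 2 ≤
      (Real.sqrt (a ^ 2 + b ^ 2) + Real.sqrt (p ^ 2 + q ^ 2)) ^ 2 := by
    have hcs : a * p + b * q ≤ Real.sqrt (a ^ 2 + b ^ 2) * Real.sqrt (p ^ 2 + q ^ 2) := by
      nlinarith [sq_nonneg (a * q - b * p), mul_nonneg hs0 ht0, sq_nonneg (a*p + b*q)]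
    nlinarith
  have := Real.sqrt_le_sqrt key
  rwa [Real.sqrt_sq (by positivity)] at this

/-- Let `φ = φ1 × φ2 : ℝ^{k0} → ℝ^{k1} × ℝ^{k2}` with `‖φ1 u‖ = c1‖u‖` (`c1 ≥ 1`)
and `‖φ2 u‖ = c2‖u‖` (`c2 > 0`), so `‖φ u‖ = c‖u‖` with `c = √(c1² + c2²)`.
If `y0 ∈ M` realizes the distance `d` from `v = (v1, v2)` to `φ(M)` and `y1 ∈ M`
realizes the distance from `v1` to `φ1(M)`, then `‖v − φ(y1)‖ ≤ (1 + 2c)·d`. -/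
theorem stmt11 (k0 k1 k2 : ℕ) (M : Set (EuclideanSpace ℝ (Fin k0))) (hM : M.Nonempty)
    (φ1 : EuclideanSpace ℝ (Fin k0) →ₗ[ℝ] EuclideanSpace ℝ (Fin k1))
    (φ2 : EuclideanSpace ℝ (Fin k0) →ₗ[ℝ] EuclideanSpace ℝ (Fin k2))
    (c1 c2 : ℝ) (hc1 : 1 ≤ c1) (hc2 : 0 < c2)
    (hφ1 : ∀ u, ‖φ1 u‖ = c1 * ‖u‖) (hφ2 : ∀ u, ‖φ2 u‖ = c2 * ‖u‖)
    (v1 : EuclideanSpace ℝ (Fin k1)) (v2 : EuclideanSpace ℝ (Fin k2))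
    (y0 y1 : EuclideanSpace ℝ (Fin k0)) (hy0 : y0 ∈ M) (hy1 : y1 ∈ M)
    (hmin0 : ∀ y ∈ M,
      Real.sqrt (‖v1 - φ1 y0‖ ^ 2 + ‖v2 - φ2 y0‖ ^ 2) ≤
        Real.sqrt (‖v1 - φ1 y‖ ^ 2 + ‖v2 - φ2 y‖ ^ 2))
    (hmin1 : ∀ y ∈ M, ‖v1 - φ1 y1‖ ≤ ‖v1 - φ1 y‖) :
    Real.sqrt (‖v1 - φ1 y1‖ ^ 2 + ‖v2 - φ2 y1‖ ^ 2) ≤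
      (1 + 2 * Real.sqrt (c1 ^ 2 + c2 ^ 2)) *
        Real.sqrt (‖v1 - φ1 y0‖ ^ 2 + ‖v2 - φ2 y0‖ ^ 2) := by
  set a0 := ‖v1 - φ1 y0‖ with ha0
  set b0 := ‖v2 - φ2 y0‖ with hb0
  set d := Real.sqrt (a0 ^ 2 + b0 ^ 2) with hd
  set c := Real.sqrt (c1 ^ 2 + c2 ^ 2) with hc
  have hc0 : 0 ≤ c := Real.sqrt_nonneg _
  set t := ‖y0 - y1‖ with htdef
  -- triangle bounds on components
  have h1 : ‖v1 - φ1 y1‖ ≤ a0 + c1 * t := by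
    have : v1 - φ1 y1 = (v1 - φ1 y0) + φ1 (y0 - y1) := by
      rw [map_sub]; abel
    rw [this]
    calc ‖(v1 - φ1 y0) + φ1 (y0 - y1)‖ ≤ ‖v1 - φ1 y0‖ + ‖φ1 (y0 - y1)‖ := norm_add_le _ _
      _ = a0 + c1 * t := by rw [hφ1]
  have h2 : ‖v2 - φ2 y1‖ ≤ b0 + c2 * t := by
    have : v2 - φ2 y1 = (v2 - φ2 y0) + φ2 (y0 - y1) := by
      rw [map_sub]; abel
    rw [this]
    calc ‖(v2 - φ2 y0) + φ2 (y0 - y1)‖ ≤ ‖v2 - φ2 y0‖ + ‖φ2 (y0 - y1)‖ := norm_add_le _ _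
      _ = b0 + c2 * t := by rw [hφ2]
  -- bound on t
  have ha1le : ‖v1 - φ1 y1‖ ≤ a0 := hmin1 y0 hy0
  have hta : c1 * t ≤ 2 * a0 := by
    have : ‖φ1 (y0 - y1)‖ ≤ ‖φ1 y0 - v1‖ + ‖v1 - φ1 y1‖ := by
      have : φ1 (y0 - y1) = (φ1 y0 - v1) + (v1 - φ1 y1) := by rw [map_sub]; abel
      rw [this]; exact norm_add_le _ _
    rw [hφ1, norm_sub_rev (φ1 y0) v1] at this
    linarith
  have ht2 : t ≤ 2 * a0 := by nlinarith [norm_nonneg (y0 - y1)]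
  have ha0d : a0 ≤ d := by
    have : a0 = Real.sqrt (a0 ^ 2) := (Real.sqrt_sq (norm_nonneg _)).symm
    rw [this, hd]
    exact Real.sqrt_le_sqrt (by nlinarith [sq_nonneg b0])
  -- main chain
  have step1 : Real.sqrt (‖v1 - φ1 y1‖ ^ 2 + ‖v2 - φ2 y1‖ ^ 2) ≤
      Real.sqrt ((a0 + c1 * t) ^ 2 + (b0 + c2 * t) ^ 2) := by
    apply Real.sqrt_le_sqrt
    have n1 := norm_nonneg (v1 - φ1 y1)
    have n2 := norm_nonneg (v2 - φ2 y1)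
    nlinarith
  have step2 : Real.sqrt ((a0 + c1 * t) ^ 2 + (b0 + c2 * t) ^ 2) ≤
      d + Real.sqrt ((c1 * t) ^ 2 + (c2 * t) ^ 2) := by
    have := sqrt_add_le a0 b0 (c1 * t) (c2 * t) (norm_nonneg _) (norm_nonneg _)
      (by positivity) (by positivity)
    simpa [← hd] using this
  have step3 : Real.sqrt ((c1 * t) ^ 2 + (c2 * t) ^ 2) = c * t := by
    have : (c1 * t) ^ 2 + (c2 * t) ^ 2 = (c1 ^ 2 + c2 ^ 2) * t ^ 2 := by ring
    rw [this, Real.sqrt_mul (by positivity), Real.sqrt_sq (norm_nonneg _), hc]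
  have hct : c * t ≤ 2 * c * d := by
    have := mul_le_mul_of_nonneg_left ht2 hc0
    have h2 := mul_le_mul_of_nonneg_left ha0d (by linarith : (0:ℝ) ≤ 2 * c)
    nlinarith
  calc Real.sqrt (‖v1 - φ1 y1‖ ^ 2 + ‖v2 - φ2 y1‖ ^ 2)
      ≤ d + Real.sqrt ((c1 * t) ^ 2 + (c2 * t) ^ 2) := step1.trans step2
    _ = d + c * t := by rw [step3]
    _ ≤ d + 2 * c * d := by linarith
    _ = (1 + 2 * c) * d := by ring
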